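/- In the quotient ring S̄ = S/(m_{(a,b)} : a ≠ b), for integers k ≥ l > 0 and any partition λ = (1^{α₁} 2^{α₂}...): m̄_{(k,l)(λ,0)(0,1)^{|λ|+k−l}} = Σ_μ [ (−1)^l · l! · (β_{|λ|−|μ|+k}+1) / ( (l−ℓ(λ)+ℓ(μ))! · ∏ᵢ (αᵢ−βᵢ)! ) ] · m̄_{(|λ|−|μ|+k,0)(μ,0)(0,1)^{|λ|+k}}, where μ = (1^{β₁} 2^{β₂}...) runs over partitions with μ ⪯ λ and ℓ(λ)−ℓ(μ) ≤ l (and 1/x! is interpreted as 0 when x < 0). -/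

import Mathlib

/-- The monomial MacMahon symmetric function `m_Λ` attached to a bipartite partition
`Λ` (a multiset of vectors in `ℕ×ℕ`), as a formal power series in two families of
variables `xᵢ = X (i,0)`, `yᵢ = X (i,1)`: the sum, with coefficients `0` or `1`, of all
monomials whose multiset of exponent pairs equals `Λ`. -/
noncomputable def mm (Λ : Multiset (ℕ × ℕ)) : MvPowerSeries (ℕ × Fin 2) ℂ :=
  fun d => if (d.support.image Prod.fst).val.map
      (fun i => (d (i, 0), d (i, 1))) = Λ then 1 else 0

/-- The ideal of `S` generated by the `m_{(a,b)}` with `a ≠ b`, as a `ℂ`-submodule: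
the span of the products `m_{(a,b)} · m_Λ`. -/
noncomputable def Jbar : Submodule ℂ (MvPowerSeries (ℕ × Fin 2) ℂ) :=
  Submodule.span ℂ {x | ∃ (a b : ℕ) (Λ : Multiset (ℕ × ℕ)),
    a ≠ b ∧ (0, 0) ∉ Λ ∧ x = mm {(a, b)} * mm Λ}

private def colF (d : (ℕ × Fin 2) →₀ ℕ) (i : ℕ) : ℕ × ℕ := (d (i, 0), d (i, 1))

private def PP (d : (ℕ × Fin 2) →₀ ℕ) : Multiset (ℕ × ℕ) :=
  (d.support.image Prod.fst).val.map (colF d)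

private lemma mm_apply (Λ : Multiset (ℕ × ℕ)) (d : (ℕ × Fin 2) →₀ ℕ) :
    mm Λ d = if PP d = Λ then 1 else 0 := rfl

private noncomputable def sng (i a b : ℕ) : (ℕ × Fin 2) →₀ ℕ :=
  Finsupp.single (i, 0) a + Finsupp.single (i, 1) b

private lemma fin2 (t : Fin 2) : t = 0 ∨ t = 1 := by omega

private lemma sng_apply0 (i a b j : ℕ) : sng i a b (j, 0) = if i = j then a else 0 := by
  simp [sng, Finsupp.single_apply, Prod.ext_iff]

private lemma sng_apply1 (i a b j : ℕ) : sng i a b (j, 1) = if i = j then b else 0 := by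
  simp [sng, Finsupp.single_apply, Prod.ext_iff]

private lemma mem_supp1 (d : (ℕ × Fin 2) →₀ ℕ) (j : ℕ) :
    j ∈ d.support.image Prod.fst ↔ colF d j ≠ (0, 0) := by
  simp only [Finset.mem_image, Finsupp.mem_support_iff]
  constructor
  · rintro ⟨⟨j', t⟩, ht, rfl⟩
    rcases fin2 t with rfl | rfl <;>
      simp_all [colF, Prod.ext_iff]
  · intro h
    have : d (j, 0) ≠ 0 ∨ d (j, 1) ≠ 0 := by
      by_contra hc
      push_neg at hc
      exact h (by simp [colF, hc.1, hc.2])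
    rcases this with h' | h'
    · exact ⟨(j, 0), h', rfl⟩
    · exact ⟨(j, 1), h', rfl⟩

private lemma col_sng_self (i a b : ℕ) : colF (sng i a b) i = (a, b) := by
  simp [colF, sng_apply0, sng_apply1]

private lemma col_sng_ne (i a b j : ℕ) (h : j ≠ i) : colF (sng i a b) j = (0, 0) := by
  simp [colF, sng_apply0, sng_apply1, (Ne.symm h : i ≠ j)]

private lemma sng_le_iff (i a b : ℕ) (d : (ℕ × Fin 2) →₀ ℕ) :
    sng i a b ≤ d ↔ a ≤ d (i, 0) ∧ b ≤ d (i, 1) := by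
  rw [Finsupp.le_def]
  constructor
  · intro h
    refine ⟨le_trans (le_of_eq ?_) (h (i, 0)), le_trans (le_of_eq ?_) (h (i, 1))⟩
    · rw [sng_apply0, if_pos rfl]
    · rw [sng_apply1, if_pos rfl]
  · rintro ⟨h1, h2⟩ ⟨j, t⟩
    rcases fin2 t with rfl | rfl
    · rw [sng_apply0]; split_ifs with h
      · exact h ▸ h1
      · exact Nat.zero_le _
    · rw [sng_apply1]; split_ifs with h
      · exact h ▸ h2
      · exact Nat.zero_le _

private lemma col_sub_ne (d : (ℕ × Fin 2) →₀ ℕ) (i a b j : ℕ) (h : j ≠ i) :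
    colF (d - sng i a b) j = colF d j := by
  have h0 := col_sng_ne i a b j h
  simp only [colF, Prod.ext_iff] at h0 ⊢
  simp [Finsupp.tsub_apply, h0.1, h0.2]

private lemma col_sub_self (d : (ℕ × Fin 2) →₀ ℕ) (i a b : ℕ) :
    colF (d - sng i a b) i = (d (i, 0) - a, d (i, 1) - b) := by
  simp [colF, Finsupp.tsub_apply, sng_apply0, sng_apply1]

private lemma PP_sng (i a b : ℕ) (hab : (a, b) ≠ ((0 : ℕ), (0 : ℕ))) :
    PP (sng i a b) = {(a, b)} := by
  have hs : (sng i a b).support.image Prod.fst = {i} := by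
    ext j
    rw [mem_supp1, Finset.mem_singleton]
    constructor
    · intro h
      by_contra hc
      exact h (col_sng_ne i a b j hc)
    · rintro rfl
      rw [col_sng_self]; exact hab
  rw [PP, hs]
  simp [col_sng_self]

private lemma PP_single_iff (e : (ℕ × Fin 2) →₀ ℕ) (a b : ℕ)
    (hab : (a, b) ≠ ((0 : ℕ), (0 : ℕ))) :
    PP e = {(a, b)} ↔ ∃ i, e = sng i a b := by
  constructor
  · intro h
    have hcard : (e.support.image Prod.fst).card = 1 := by
      have := congrArg Multiset.card h
      rw [PP, Multiset.card_map] at this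
      exact this
    obtain ⟨i, hi⟩ := Finset.card_eq_one.mp hcard
    have hcol : colF e i = (a, b) := by
      rw [PP, hi] at h
      simpa using h
    refine ⟨i, ?_⟩
    ext ⟨j, t⟩
    by_cases hj : j = i
    · subst hj
      have h0 : e (j, 0) = a := congrArg Prod.fst hcol
      have h1 : e (j, 1) = b := congrArg Prod.snd hcol
      rcases fin2 t with rfl | rfl
      · rw [h0, sng_apply0, if_pos rfl]
      · rw [h1, sng_apply1, if_pos rfl]
    · have : j ∉ e.support.image Prod.fst := by rw [hi]; simpa using hj
      have hc : colF e j = (0, 0) := by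
        by_contra hc; exact this ((mem_supp1 e j).mpr hc)
      have h0 : e (j, 0) = 0 := congrArg Prod.fst hc
      have h1 : e (j, 1) = 0 := congrArg Prod.snd hc
      rcases fin2 t with rfl | rfl
      · rw [h0, sng_apply0, if_neg (Ne.symm hj)]
      · rw [h1, sng_apply1, if_neg (Ne.symm hj)]
  · rintro ⟨i, rfl⟩
    exact PP_sng i a b hab

private lemma PP_cons (d : (ℕ × Fin 2) →₀ ℕ) (i : ℕ) (h : i ∈ d.support.image Prod.fst) :
    PP d = colF d i ::ₘ ((d.support.image Prod.fst).erase i).val.map (colF d) := by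
  rw [PP]
  have : (d.support.image Prod.fst).val = i ::ₘ ((d.support.image Prod.fst).erase i).val := by
    rw [Finset.erase_val]
    exact (Multiset.cons_erase (Finset.mem_def.mp h)).symm
  rw [this, Multiset.map_cons]

private lemma PP_sub (d : (ℕ × Fin 2) →₀ ℕ) (i a b : ℕ)
    (h1 : i ∈ d.support.image Prod.fst) :
    PP (d - sng i a b) =
      if (d (i, 0) - a, d (i, 1) - b) = ((0 : ℕ), (0 : ℕ)) then (PP d).erase (colF d i)
      else (d (i, 0) - a, d (i, 1) - b) ::ₘ (PP d).erase (colF d i) := by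
  set d' := d - sng i a b with hd'
  have herase : (PP d).erase (colF d i) =
      ((d.support.image Prod.fst).erase i).val.map (colF d) := by
    rw [PP_cons d i h1, Multiset.erase_cons_head]
  have hcongr : ∀ s : Multiset ℕ, (∀ j ∈ s, j ≠ i) →
      s.map (colF d') = s.map (colF d) := by
    intro s hs
    exact Multiset.map_congr rfl fun j hj => col_sub_ne d i a b j (hs j hj)
  by_cases hq : (d (i, 0) - a, d (i, 1) - b) = ((0 : ℕ), (0 : ℕ))
  · rw [if_pos hq]
    have hsupp : d'.support.image Prod.fst = (d.support.image Prod.fst).erase i := by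
      ext j
      rw [Finset.mem_erase, mem_supp1, mem_supp1]
      by_cases hj : j = i
      · subst hj
        simp only [hd', col_sub_self, hq]
        tauto
      · rw [col_sub_ne d i a b j hj]
        tauto
    rw [PP, hsupp, herase]
    exact hcongr _ fun j hj => (Finset.mem_erase.mp (Finset.mem_def.mpr hj)).1
  · rw [if_neg hq]
    have hi' : i ∈ d'.support.image Prod.fst := by
      rw [mem_supp1, hd', col_sub_self]
      exact hq
    have hsupp : d'.support.image Prod.fst = d.support.image Prod.fst := by
      ext j
      by_cases hj : j = i
      · subst hj; simp [hi', h1]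
      · rw [mem_supp1, mem_supp1, col_sub_ne d i a b j hj]
    rw [PP_cons d' i hi', hsupp, hd', col_sub_self, herase]
    congr 1
    exact hcongr _ fun j hj => (Finset.mem_erase.mp (Finset.mem_def.mpr hj)).1

private lemma mul_coeff (a b : ℕ) (hab : (a, b) ≠ ((0 : ℕ), (0 : ℕ)))
    (g : MvPowerSeries (ℕ × Fin 2) ℂ) (d : (ℕ × Fin 2) →₀ ℕ) :
    (mm {(a, b)} * g) d = ∑ i ∈ d.support.image Prod.fst,
      (if sng i a b ≤ d then g (d - sng i a b) else 0) := by
  have hmul : (mm {(a, b)} * g) d =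
      ∑ p ∈ Finset.HasAntidiagonal.antidiagonal d, mm {(a, b)} p.1 * g p.2 :=
    MvPowerSeries.coeff_mul d (mm {(a, b)}) g
  rw [hmul]
  have hterm : ∀ p ∈ Finset.HasAntidiagonal.antidiagonal d, mm {(a, b)} p.1 * g p.2 =
      (if PP p.1 = {(a, b)} then g p.2 else 0) := by
    intro p _
    rw [mm_apply]
    split_ifs <;> simp
  rw [Finset.sum_congr rfl hterm, ← Finset.sum_filter, ← Finset.sum_filter]
  refine (Finset.sum_bij
    (fun i _ => ((sng i a b, d - sng i a b) :
      ((ℕ × Fin 2) →₀ ℕ) × ((ℕ × Fin 2) →₀ ℕ))) ?_ ?_ ?_ ?_).symm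
  · intro i hi
    rw [Finset.mem_filter] at hi ⊢
    refine ⟨Finset.HasAntidiagonal.mem_antidiagonal.mpr (add_tsub_cancel_of_le hi.2), PP_sng i a b hab⟩
  · intro i hi j hj hij
    have hf : sng i a b = sng j a b := congrArg Prod.fst hij
    have h1 := DFunLike.congr_fun hf ((i, 0) : ℕ × Fin 2)
    have h2 := DFunLike.congr_fun hf ((i, 1) : ℕ × Fin 2)
    rw [sng_apply0, sng_apply0, if_pos rfl] at h1
    rw [sng_apply1, sng_apply1, if_pos rfl] at h2
    by_cases hji : j = i
    · exact hji.symm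
    · rw [if_neg hji] at h1 h2
      exfalso
      apply hab
      rw [Prod.ext_iff]
      exact ⟨h1, h2⟩
  · intro p hp
    rw [Finset.mem_filter] at hp
    obtain ⟨hp1, hp2⟩ := hp
    have hsum : p.1 + p.2 = d := Finset.HasAntidiagonal.mem_antidiagonal.mp hp1
    obtain ⟨i, hi⟩ := (PP_single_iff p.1 a b hab).mp hp2
    have hle : sng i a b ≤ d := le_iff_exists_add.mpr ⟨p.2, by rw [← hi, ← hsum]⟩
    have hmem : i ∈ d.support.image Prod.fst := by
      rw [mem_supp1]
      intro hc
      rw [sng_le_iff] at hle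
      have h0 : d (i, 0) = 0 := congrArg Prod.fst hc
      have h1 : d (i, 1) = 0 := congrArg Prod.snd hc
      apply hab
      rw [Prod.ext_iff]
      constructor
      · exact Nat.le_zero.mp (h0 ▸ hle.1)
      · exact Nat.le_zero.mp (h1 ▸ hle.2)
    refine ⟨i, Finset.mem_filter.mpr ⟨hmem, hle⟩, ?_⟩
    have : p.2 = d - sng i a b := by
      rw [← hi]
      exact eq_tsub_of_add_eq (by rw [add_comm]; exact hsum)
    rw [Prod.ext_iff]
    exact ⟨hi.symm, this.symm⟩
  · intro i hi
    rfl

private def condF (a b : ℕ) (N Λ : Multiset (ℕ × ℕ)) (q : ℕ × ℕ) : Prop :=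
  a ≤ q.1 ∧ b ≤ q.2 ∧
    ((q.1 - a, q.2 - b) = ((0 : ℕ), (0 : ℕ)) ∧ N.erase q = Λ ∨
     (q.1 - a, q.2 - b) ≠ ((0 : ℕ), (0 : ℕ)) ∧ (q.1 - a, q.2 - b) ::ₘ N.erase q = Λ)

open scoped Classical

open scoped Classical in
private lemma master (a b : ℕ) (hab : (a, b) ≠ ((0 : ℕ), (0 : ℕ)))
    (Λ : Multiset (ℕ × ℕ)) (d : (ℕ × Fin 2) →₀ ℕ) :
    (mm {(a, b)} * mm Λ) d =
      ((PP d).map fun q => if condF a b (PP d) Λ q then (1 : ℂ) else 0).sum := by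
  rw [mul_coeff a b hab (mm Λ) d]
  have key : ∀ i ∈ d.support.image Prod.fst,
      (if sng i a b ≤ d then mm Λ (d - sng i a b) else 0) =
      (if condF a b (PP d) Λ (colF d i) then (1 : ℂ) else 0) := by
    intro i hi
    by_cases hle : sng i a b ≤ d
    · rw [if_pos hle, mm_apply, PP_sub d i a b hi]
      rw [sng_le_iff] at hle
      by_cases hq : (d (i, 0) - a, d (i, 1) - b) = ((0 : ℕ), (0 : ℕ))
      · rw [if_pos hq]
        have : condF a b (PP d) Λ (colF d i) ↔ (PP d).erase (colF d i) = Λ := by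
          unfold condF colF
          constructor
          · rintro ⟨-, -, ⟨-, h⟩ | ⟨hne, -⟩⟩
            · exact h
            · exact absurd hq hne
          · intro h
            exact ⟨hle.1, hle.2, Or.inl ⟨hq, h⟩⟩
        exact if_congr this.symm rfl rfl
      · rw [if_neg hq]
        have : condF a b (PP d) Λ (colF d i) ↔
            (d (i, 0) - a, d (i, 1) - b) ::ₘ (PP d).erase (colF d i) = Λ := by
          unfold condF colF
          constructor
          · rintro ⟨-, -, ⟨heq, -⟩ | ⟨-, h⟩⟩
            · exact absurd heq hq
            · exact h
          · intro h
            exact ⟨hle.1, hle.2, Or.inr ⟨hq, h⟩⟩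
        exact if_congr this.symm rfl rfl
    · rw [if_neg hle, sng_le_iff] at *
      rw [if_neg ?_]
      unfold condF colF
      intro hc
      exact hle ⟨hc.1, hc.2.1⟩
  rw [Finset.sum_congr rfl key]
  rw [Finset.sum, PP, Multiset.map_map]
  rfl

private lemma inj0 : Function.Injective (fun i : ℕ => ((i, 0) : ℕ × ℕ)) :=
  fun _ _ h => (Prod.ext_iff.mp h).1

/-- shorthand notations -/
private def mpart (lam : Multiset ℕ) (s : ℕ) : Multiset (ℕ × ℕ) :=
  lam.map (fun i => (i, 0)) + Multiset.replicate s ((0 : ℕ), (1 : ℕ))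

private lemma cntL (lam : Multiset ℕ) (s x y : ℕ) :
    Multiset.count ((x, y) : ℕ × ℕ) (mpart lam s)
      = (if y = 0 then lam.count x else 0) + (if x = 0 ∧ y = 1 then s else 0) := by
  rw [mpart, Multiset.count_add, Multiset.count_replicate]
  congr 1
  · by_cases hy : y = 0
    · subst hy
      rw [if_pos rfl]
      exact Multiset.count_map_eq_count' _ _ inj0 x
    · rw [if_neg hy, Multiset.count_eq_zero]
      intro hc
      obtain ⟨i, _, hi⟩ := Multiset.mem_map.mp hc
      exact hy ((Prod.ext_iff.mp hi).2).symm
  · have h : (((0 : ℕ), (1 : ℕ)) = ((x, y) : ℕ × ℕ)) ↔ (x = 0 ∧ y = 1) := by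
      rw [eq_comm, Prod.ext_iff]
    exact if_congr h rfl rfl

private lemma erase0 (lam : Multiset ℕ) (s v : ℕ) (hv : v ∈ lam) :
    (mpart lam s).erase (v, 0) = mpart (lam.erase v) s := by
  rw [mpart, Multiset.erase_add_left_pos _ (Multiset.mem_map_of_mem _ hv), mpart,
    Multiset.map_erase _ inj0]

private lemma erase1 (lam : Multiset ℕ) (r : ℕ) :
    (mpart lam (r + 1)).erase (0, 1) = mpart lam r := by
  rw [mpart, Multiset.replicate_succ,
    Multiset.erase_add_right_pos _ (Multiset.mem_cons_self _ _), Multiset.erase_cons_head, mpart]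

private lemma cons_mpart (lam : Multiset ℕ) (s v : ℕ) :
    ((v, 0) : ℕ × ℕ) ::ₘ mpart lam s = mpart (v ::ₘ lam) s := by
  rw [mpart, mpart, Multiset.map_cons, Multiset.cons_add]

private lemma cons_mpart1 (lam : Multiset ℕ) (r : ℕ) :
    ((0, 1) : ℕ × ℕ) ::ₘ mpart lam r = mpart lam (r + 1) := by
  rw [mpart, mpart, Multiset.replicate_succ, Multiset.add_cons]

/- the three shapes -/
private def G0 (a b : ℕ) (lam : Multiset ℕ) (r : ℕ) : Multiset (ℕ × ℕ) :=
  (a, b) ::ₘ mpart lam (r + 1)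
private def G1 (a b : ℕ) (lam : Multiset ℕ) (r : ℕ) : Multiset (ℕ × ℕ) :=
  (a, b + 1) ::ₘ mpart lam r
private def GV (a b : ℕ) (lam : Multiset ℕ) (r v : ℕ) : Multiset (ℕ × ℕ) :=
  (a + v, b) ::ₘ mpart (lam.erase v) (r + 1)

private lemma D1 (a b : ℕ) (ha : 1 ≤ a) (lam : Multiset ℕ) (r : ℕ) :
    G0 a b lam r ≠ G1 a b lam r := by
  intro h
  have := congrArg (Multiset.count ((a, b + 1) : ℕ × ℕ)) h
  rw [G0, G1, Multiset.count_cons, Multiset.count_cons, cntL, cntL] at this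
  simp only [Prod.mk.injEq] at this
  split_ifs at this <;> first | exact ‹False› | omega

private lemma D2 (a b : ℕ) (ha : 1 ≤ a) (lam : Multiset ℕ) (r v : ℕ) (hv : v ∈ lam) :
    G0 a b lam r ≠ GV a b lam r v := by
  intro h
  have := congrArg (Multiset.count ((v, 0) : ℕ × ℕ)) h
  rw [G0, GV, Multiset.count_cons, Multiset.count_cons, cntL, cntL,
    Multiset.count_erase_self] at this
  have hc : 0 < lam.count v := Multiset.count_pos.mpr hv
  simp only [Prod.mk.injEq] at this
  split_ifs at this <;> first | exact ‹False› | omega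

private lemma D3 (a b : ℕ) (ha : 1 ≤ a) (lam : Multiset ℕ) (r v : ℕ) :
    G1 a b lam r ≠ GV a b lam r v := by
  intro h
  have := congrArg (Multiset.count ((a, b + 1) : ℕ × ℕ)) h
  rw [G1, GV, Multiset.count_cons, Multiset.count_cons, cntL, cntL] at this
  simp only [Prod.mk.injEq] at this
  split_ifs at this <;> first | exact ‹False› | omega

private lemma D4 (a b : ℕ) (ha : 1 ≤ a) (lam : Multiset ℕ) (r : ℕ) {v v' : ℕ}
    (hv : v ∈ lam) (hv' : v' ∈ lam) (h : GV a b lam r v = GV a b lam r v') : v = v' := by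
  by_contra hne
  have hcv := congrArg (Multiset.count ((v, 0) : ℕ × ℕ)) h
  rw [GV, GV, Multiset.count_cons, Multiset.count_cons, cntL, cntL,
    Multiset.count_erase_self, Multiset.count_erase_of_ne hne] at hcv
  have hc : 0 < lam.count v := Multiset.count_pos.mpr hv
  simp only [Prod.mk.injEq] at hcv
  split_ifs at hcv <;> first | exact ‹False› | omega

private lemma classify (a b : ℕ) (ha : 1 ≤ a) (lam : Multiset ℕ) (h0 : (0 : ℕ) ∉ lam)
    (r : ℕ) (N : Multiset (ℕ × ℕ)) (q : ℕ × ℕ) (hq : q ∈ N) :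
    condF a b N (mpart lam (r + 1)) q ↔
      (q = (a, b) ∧ N = G0 a b lam r) ∨ (q = (a, b + 1) ∧ N = G1 a b lam r) ∨
      ∃ v ∈ lam.toFinset, q = (a + v, b) ∧ N = GV a b lam r v := by
  constructor
  · rintro ⟨hq1, hq2, ⟨heq, her⟩ | ⟨hne, hcons⟩⟩
    · left
      obtain ⟨he1, he2⟩ := Prod.ext_iff.mp heq
      have hqab : q = (a, b) := by
        rw [Prod.ext_iff]
        constructor <;> [skip; skip] <;> simp at he1 he2 ⊢ <;> omega
      refine ⟨hqab, ?_⟩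
      rw [← Multiset.cons_erase hq, her, hqab, G0]
    · have hmem : (q.1 - a, q.2 - b) ∈ mpart lam (r + 1) := by
        rw [← hcons]; exact Multiset.mem_cons_self _ _
      have herq : N.erase q = (mpart lam (r + 1)).erase (q.1 - a, q.2 - b) := by
        rw [← hcons, Multiset.erase_cons_head]
      rw [mpart, Multiset.mem_add] at hmem
      rcases hmem with hm | hm
      · obtain ⟨v, hvmem, hveq⟩ := Multiset.mem_map.mp hm
        obtain ⟨hv1, hv2⟩ := Prod.ext_iff.mp hveq
        right; right
        have hv0 : v ≠ 0 := fun hc => h0 (hc ▸ hvmem)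
        have hq2b : q.2 = b := by omega
        have hq1a : q.1 = a + v := by omega
        refine ⟨v, Multiset.mem_toFinset.mpr hvmem, ?_, ?_⟩
        · rw [Prod.ext_iff]; exact ⟨hq1a, hq2b⟩
        · rw [← Multiset.cons_erase hq, herq, ← hveq, erase0 lam _ v hvmem, GV,
            ← hq1a, ← hq2b]
      · have hq01 : (q.1 - a, q.2 - b) = ((0 : ℕ), (1 : ℕ)) := Multiset.eq_of_mem_replicate hm
        obtain ⟨hv1, hv2⟩ := Prod.ext_iff.mp hq01
        right; left
        have hq1a : q.1 = a := by omega
        have hq2b : q.2 = b + 1 := by omega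
        refine ⟨by rw [Prod.ext_iff]; exact ⟨hq1a, hq2b⟩, ?_⟩
        rw [← Multiset.cons_erase hq, herq, hq01, erase1, G1, ← hq1a, ← hq2b]
  · rintro (⟨rfl, rfl⟩ | ⟨rfl, rfl⟩ | ⟨v, hv, rfl, rfl⟩)
    · refine ⟨le_refl a, le_refl b, Or.inl ⟨by simp, ?_⟩⟩
      rw [G0, Multiset.erase_cons_head]
    · refine ⟨le_refl a, by omega, Or.inr ⟨by simp, ?_⟩⟩
      have h1 : ((a : ℕ) - a, b + 1 - b) = ((0 : ℕ), (1 : ℕ)) := by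
        rw [Prod.ext_iff]; constructor <;> simp
      rw [h1, G1, Multiset.erase_cons_head, cons_mpart1]
    · have hvm : v ∈ lam := Multiset.mem_toFinset.mp hv
      have hv0 : v ≠ 0 := fun hc => h0 (hc ▸ hvm)
      refine ⟨by omega, le_refl b, Or.inr ⟨?_, ?_⟩⟩
      · intro hc
        obtain ⟨hc1, _⟩ := Prod.ext_iff.mp hc
        simp only at hc1
        omega
      · have h1 : ((a + v : ℕ) - a, b - b) = ((v : ℕ), (0 : ℕ)) := by
          rw [Prod.ext_iff]; constructor <;> simp
        rw [h1, GV, Multiset.erase_cons_head, cons_mpart, Multiset.cons_erase hvm]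

private lemma sum_indicator (N : Multiset (ℕ × ℕ)) (x : ℕ × ℕ) :
    (N.map fun q => if q = x then (1 : ℂ) else 0).sum = (N.count x : ℂ) := by
  refine Multiset.induction_on N (by simp) ?_
  intro y s ih
  rw [Multiset.map_cons, Multiset.sum_cons, ih, Multiset.count_cons]
  by_cases h : y = x
  · rw [if_pos h, if_pos h.symm]
    push_cast
    ring
  · rw [if_neg h, if_neg fun hc => h hc.symm]
    push_cast
    ring

private lemma EXPcomb (a b : ℕ) (ha : 1 ≤ a) (lam : Multiset ℕ) (h0 : (0 : ℕ) ∉ lam)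
    (r : ℕ) (N : Multiset (ℕ × ℕ)) :
    (N.map fun q => if condF a b N (mpart lam (r + 1)) q then (1 : ℂ) else 0).sum
      = (if N = G1 a b lam r then (1 : ℂ) else 0)
        + ((Multiset.count ((a, b) : ℕ × ℕ) (mpart lam (r + 1)) : ℂ) + 1) *
            (if N = G0 a b lam r then (1 : ℂ) else 0)
        + ∑ v ∈ lam.toFinset,
            ((Multiset.count ((a + v, b) : ℕ × ℕ) (mpart (lam.erase v) (r + 1)) : ℂ) + 1) *
              (if N = GV a b lam r v then (1 : ℂ) else 0) := by
  by_cases h0' : N = G0 a b lam r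
  · subst h0'
    have hcong : ∀ q ∈ G0 a b lam r,
        (if condF a b (G0 a b lam r) (mpart lam (r + 1)) q then (1 : ℂ) else 0)
          = (if q = ((a, b) : ℕ × ℕ) then (1 : ℂ) else 0) := by
      intro q hq
      refine if_congr ?_ rfl rfl
      rw [classify a b ha lam h0 r _ q hq]
      constructor
      · rintro (⟨h1, -⟩ | ⟨-, h2⟩ | ⟨v, hv, -, h2⟩)
        · exact h1
        · exact absurd h2 (D1 a b ha lam r)
        · exact absurd h2 (D2 a b ha lam r v (Multiset.mem_toFinset.mp hv))
      · intro h1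
        exact Or.inl ⟨h1, rfl⟩
    rw [Multiset.map_congr rfl hcong, sum_indicator,
      if_neg (D1 a b ha lam r), if_pos rfl,
      Finset.sum_eq_zero fun v hv => by
        rw [if_neg (D2 a b ha lam r v (Multiset.mem_toFinset.mp hv)), mul_zero]]
    rw [G0, Multiset.count_cons, if_pos rfl]
    push_cast
    ring
  · by_cases h1' : N = G1 a b lam r
    · subst h1'
      have hcong : ∀ q ∈ G1 a b lam r,
          (if condF a b (G1 a b lam r) (mpart lam (r + 1)) q then (1 : ℂ) else 0)
            = (if q = ((a, b + 1) : ℕ × ℕ) then (1 : ℂ) else 0) := by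
        intro q hq
        refine if_congr ?_ rfl rfl
        rw [classify a b ha lam h0 r _ q hq]
        constructor
        · rintro (⟨-, h2⟩ | ⟨h1, -⟩ | ⟨v, hv, -, h2⟩)
          · exact absurd h2.symm (D1 a b ha lam r)
          · exact h1
          · exact absurd h2 (D3 a b ha lam r v)
        · intro h1
          exact Or.inr (Or.inl ⟨h1, rfl⟩)
      rw [Multiset.map_congr rfl hcong, sum_indicator,
        if_pos rfl, if_neg fun hc => (D1 a b ha lam r) hc.symm,
        Finset.sum_eq_zero fun v hv => by
          rw [if_neg (D3 a b ha lam r v), mul_zero]]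
      rw [G1, Multiset.count_cons, if_pos rfl, cntL]
      have hb1 : ¬(b + 1 = 0) := by omega
      have ha0 : ¬(a = 0 ∧ b + 1 = 1) := by omega
      rw [if_neg hb1, if_neg ha0]
      push_cast
      ring
    · by_cases hv' : ∃ v ∈ lam.toFinset, N = GV a b lam r v
      · obtain ⟨v, hv, rfl⟩ := hv'
        have hvm : v ∈ lam := Multiset.mem_toFinset.mp hv
        have hcong : ∀ q ∈ GV a b lam r v,
            (if condF a b (GV a b lam r v) (mpart lam (r + 1)) q then (1 : ℂ) else 0)
              = (if q = ((a + v, b) : ℕ × ℕ) then (1 : ℂ) else 0) := by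
          intro q hq
          refine if_congr ?_ rfl rfl
          rw [classify a b ha lam h0 r _ q hq]
          constructor
          · rintro (⟨-, h2⟩ | ⟨-, h2⟩ | ⟨v', hv2, h1, h2⟩)
            · exact absurd h2.symm (D2 a b ha lam r v hvm)
            · exact absurd h2.symm (D3 a b ha lam r v)
            · have hvv' := D4 a b ha lam r hvm (Multiset.mem_toFinset.mp hv2) h2
              rw [← hvv'] at h1
              exact h1
          · intro h1
            exact Or.inr (Or.inr ⟨v, hv, h1, rfl⟩)
        rw [Multiset.map_congr rfl hcong, sum_indicator,
          if_neg fun hc => (D3 a b ha lam r v) hc.symm,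
          if_neg fun hc => (D2 a b ha lam r v hvm) hc.symm]
        rw [Finset.sum_eq_single v
          (fun v' hv2 hne => by
            rw [if_neg fun hc => hne (D4 a b ha lam r hvm (Multiset.mem_toFinset.mp hv2) hc).symm,
              mul_zero])
          (fun hc => absurd hv hc)]
        rw [if_pos rfl, GV, Multiset.count_cons, if_pos rfl]
        push_cast
        ring
      · have hcong : ∀ q ∈ N,
            (if condF a b N (mpart lam (r + 1)) q then (1 : ℂ) else 0) = 0 := by
          intro q hq
          rw [if_neg]
          rw [classify a b ha lam h0 r N q hq]
          rintro (⟨-, h2⟩ | ⟨-, h2⟩ | ⟨v, hv2, -, h2⟩)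
          · exact h0' h2
          · exact h1' h2
          · exact hv' ⟨v, hv2, h2⟩
        rw [Multiset.map_congr rfl hcong]
        rw [if_neg h1', if_neg h0',
          Finset.sum_eq_zero fun v hv => by
            rw [if_neg fun hc => hv' ⟨v, hv, hc⟩, mul_zero]]
        simp

private lemma EXP (a b : ℕ) (ha : 1 ≤ a) (lam : Multiset ℕ) (h0 : (0 : ℕ) ∉ lam) (r : ℕ) :
    mm {(a, b)} * mm (mpart lam (r + 1))
      = mm (G1 a b lam r)
        + ((Multiset.count ((a, b) : ℕ × ℕ) (mpart lam (r + 1)) : ℂ) + 1) • mm (G0 a b lam r)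
        + ∑ v ∈ lam.toFinset,
            ((Multiset.count ((a + v, b) : ℕ × ℕ) (mpart (lam.erase v) (r + 1)) : ℂ) + 1) •
              mm (GV a b lam r v) := by
  funext d
  have hab : ((a : ℕ), (b : ℕ)) ≠ ((0 : ℕ), (0 : ℕ)) := by
    intro hc
    have := (Prod.ext_iff.mp hc).1
    simp only at this
    omega
  have hL : (mm {(a, b)} * mm (mpart lam (r + 1))) d
      = ((PP d).map fun q =>
          if condF a b (PP d) (mpart lam (r + 1)) q then (1 : ℂ) else 0).sum :=
    master a b hab _ d
  have hR : (mm (G1 a b lam r)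
        + ((Multiset.count ((a, b) : ℕ × ℕ) (mpart lam (r + 1)) : ℂ) + 1) • mm (G0 a b lam r)
        + ∑ v ∈ lam.toFinset,
            ((Multiset.count ((a + v, b) : ℕ × ℕ) (mpart (lam.erase v) (r + 1)) : ℂ) + 1) •
              mm (GV a b lam r v)) d
      = mm (G1 a b lam r) d
        + ((Multiset.count ((a, b) : ℕ × ℕ) (mpart lam (r + 1)) : ℂ) + 1) * mm (G0 a b lam r) d
        + ∑ v ∈ lam.toFinset,
            ((Multiset.count ((a + v, b) : ℕ × ℕ) (mpart (lam.erase v) (r + 1)) : ℂ) + 1) *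
              mm (GV a b lam r v) d := by
    have e3 : ∀ (s : Finset ℕ) (F : ℕ → MvPowerSeries (ℕ × Fin 2) ℂ),
        (∑ v ∈ s, F v) d = ∑ v ∈ s, F v d := fun s F => map_sum (MvPowerSeries.coeff d) F s
    show (_ : MvPowerSeries (ℕ × Fin 2) ℂ) d + _ = _
    rw [show ∀ (f g : MvPowerSeries (ℕ × Fin 2) ℂ), (f + g) d = f d + g d from fun _ _ => rfl,
      e3]
    rfl
  rw [hL, hR, mm_apply, mm_apply]
  rw [Finset.sum_congr rfl fun v _ => by rw [mm_apply]]
  exact EXPcomb a b ha lam h0 r (PP d)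


private noncomputable def coefC (k l : ℕ) (lam μ : Multiset ℕ) : ℂ :=
  if lam.card ≤ l + μ.card then
    ((-1 : ℂ) ^ l * (Nat.factorial l : ℂ) * ((μ.count (lam.sum - μ.sum + k) : ℂ) + 1)) /
      ((Nat.factorial (l + μ.card - lam.card) : ℂ) *
        ∏ i ∈ lam.toFinset, (Nat.factorial (lam.count i - μ.count i) : ℂ))
  else 0

private lemma msum_le {s t : Multiset ℕ} (h : s ≤ t) : s.sum ≤ t.sum := by
  obtain ⟨u, rfl⟩ := Multiset.le_iff_exists_add.mp h
  rw [Multiset.sum_add]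
  omega

private lemma sum_erase_add {v : ℕ} {lam : Multiset ℕ} (h : v ∈ lam) :
    (lam.erase v).sum + v = lam.sum := by
  conv_rhs => rw [← Multiset.cons_erase h]
  rw [Multiset.sum_cons]
  ring

private lemma le_erase_iff {μ lam : Multiset ℕ} (hμ : μ ≤ lam) (v : ℕ) (hv : v ∈ lam) :
    μ ≤ lam.erase v ↔ μ.count v < lam.count v := by
  constructor
  · intro h
    have h1 := Multiset.le_iff_count.mp h v
    rw [Multiset.count_erase_self] at h1
    have h2 : 0 < lam.count v := Multiset.count_pos.mpr hv
    omega
  · intro h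
    rw [Multiset.le_iff_count]
    intro a
    by_cases hav : a = v
    · subst hav
      rw [Multiset.count_erase_self]
      omega
    · rw [Multiset.count_erase_of_ne hav]
      exact Multiset.le_iff_count.mp hμ a

private lemma prod_fact_erase {μ lam : Multiset ℕ} {v : ℕ} (hv : v ∈ lam)
    (hme : μ ≤ lam.erase v) :
    (∏ i ∈ lam.toFinset, (Nat.factorial (lam.count i - μ.count i) : ℂ))
      = ((lam.count v - μ.count v : ℕ) : ℂ) *
        ∏ i ∈ (lam.erase v).toFinset,
          (Nat.factorial ((lam.erase v).count i - μ.count i) : ℂ) := by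
  have hμ : μ ≤ lam := le_trans hme (Multiset.erase_le v lam)
  have hcnt : μ.count v < lam.count v := (le_erase_iff hμ v hv).mp hme
  have hsub : (lam.erase v).toFinset ⊆ lam.toFinset :=
    Multiset.toFinset_subset.mpr (Multiset.subset_of_le (Multiset.erase_le v lam))
  have hext : (∏ i ∈ (lam.erase v).toFinset,
        (Nat.factorial ((lam.erase v).count i - μ.count i) : ℂ))
      = ∏ i ∈ lam.toFinset, (Nat.factorial ((lam.erase v).count i - μ.count i) : ℂ) := by
    refine Finset.prod_subset hsub ?_
    intro i _ hi
    have h0 : (lam.erase v).count i = 0 := by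
      rw [Multiset.count_eq_zero]
      exact fun hc => hi (Multiset.mem_toFinset.mpr hc)
    have hβ : μ.count i = 0 := by
      have := Multiset.le_iff_count.mp hme i
      omega
    rw [h0, hβ]
    norm_num
  have hvF : v ∈ lam.toFinset := Multiset.mem_toFinset.mpr hv
  rw [hext, ← Finset.mul_prod_erase lam.toFinset _ hvF, ← Finset.mul_prod_erase lam.toFinset
    (fun i => (Nat.factorial ((lam.erase v).count i - μ.count i) : ℂ)) hvF]
  have hc1 : ((lam.erase v).count v - μ.count v) = (lam.count v - μ.count v) - 1 := by
    rw [Multiset.count_erase_self]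
    omega
  have hfact : (Nat.factorial (lam.count v - μ.count v) : ℂ)
      = ((lam.count v - μ.count v : ℕ) : ℂ) *
        (Nat.factorial ((lam.erase v).count v - μ.count v) : ℂ) := by
    rw [hc1, ← Nat.mul_factorial_pred (by omega : lam.count v - μ.count v ≠ 0)]
    push_cast
    ring
  rw [hfact]
  have hrest : ∀ i ∈ lam.toFinset.erase v,
      (Nat.factorial (lam.count i - μ.count i) : ℂ)
        = (Nat.factorial ((lam.erase v).count i - μ.count i) : ℂ) := by
    intro i hi
    rw [Multiset.count_erase_of_ne (Finset.mem_erase.mp hi).1]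
  rw [Finset.prod_congr rfl hrest]
  ring

private lemma sum_counts_sub {μ lam : Multiset ℕ} (hμ : μ ≤ lam) :
    ∑ v ∈ lam.toFinset, (lam.count v - μ.count v) = lam.card - μ.card := by
  rw [Finset.sum_tsub_distrib _ (fun v _ => Multiset.le_iff_count.mp hμ v)]
  rw [Multiset.toFinset_sum_count_eq]
  congr 1
  rw [← Multiset.toFinset_sum_count_eq μ]
  refine (Finset.sum_subset ?_ ?_).symm
  · exact Multiset.toFinset_subset.mpr (Multiset.subset_of_le hμ)
  · intro i _ hi
    rw [Multiset.count_eq_zero]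
    exact fun hc => hi (Multiset.mem_toFinset.mpr hc)

private lemma fid1 (c L B P T t l : ℂ) (hP : P ≠ 0) (hT : T ≠ 0) (ht : t + 1 ≠ 0) :
    c * L * B / (T * P) + c * L * B / ((t + 1) * T * P) * (l - t)
      + c * -1 * ((l + 1) * L) * B / ((t + 1) * T * P) = 0 := by
  field_simp
  ring

private lemma KEY (k l : ℕ) (lam μ : Multiset ℕ) (hμ : μ ≤ lam) :
    coefC k l lam μ
      + (∑ v ∈ lam.toFinset, if μ ≤ lam.erase v then coefC (k + v) l (lam.erase v) μ else 0)
      + coefC k (l + 1) lam μ = 0 := by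
  have hmM : μ.card ≤ lam.card := Multiset.card_le_card hμ
  have hPne : (∏ i ∈ lam.toFinset, (Nat.factorial (lam.count i - μ.count i) : ℂ)) ≠ 0 := by
    rw [Finset.prod_ne_zero_iff]
    intro i _
    exact_mod_cast Nat.factorial_ne_zero _
  by_cases hcase1 : lam.card ≤ l + 1 + μ.card
  · have hterm : ∀ v ∈ lam.toFinset,
        (if μ ≤ lam.erase v then coefC (k + v) l (lam.erase v) μ else 0)
          = ((-1 : ℂ) ^ l * (Nat.factorial l : ℂ) *
              ((μ.count (lam.sum - μ.sum + k) : ℂ) + 1)) /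
            ((Nat.factorial (l + 1 + μ.card - lam.card) : ℂ) *
              ∏ i ∈ lam.toFinset, (Nat.factorial (lam.count i - μ.count i) : ℂ)) *
            ((lam.count v - μ.count v : ℕ) : ℂ) := by
      intro v hv
      have hvm : v ∈ lam := Multiset.mem_toFinset.mp hv
      have hMpos : 0 < lam.card := Multiset.card_pos_iff_exists_mem.mpr ⟨v, hvm⟩
      by_cases hme : μ ≤ lam.erase v
      · rw [if_pos hme, coefC]
        have hcard : (lam.erase v).card = lam.card - 1 := by
          rw [Multiset.card_erase_of_mem hvm, Nat.pred_eq_sub_one]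
        have hcond : (lam.erase v).card ≤ l + μ.card := by omega
        rw [if_pos hcond]
        have hes : (lam.erase v).sum + v = lam.sum := sum_erase_add hvm
        have hms : μ.sum ≤ (lam.erase v).sum := msum_le hme
        have hidx : (lam.erase v).sum - μ.sum + (k + v) = lam.sum - μ.sum + k := by omega
        have hfct : l + μ.card - (lam.erase v).card = l + 1 + μ.card - lam.card := by omega
        rw [hidx, hfct, prod_fact_erase hvm hme]
        have hcnt : μ.count v < lam.count v := (le_erase_iff (le_trans hme
          (Multiset.erase_le v lam)) v hvm).mp hme
        have hc0 : ((lam.count v - μ.count v : ℕ) : ℂ) ≠ 0 := by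
          rw [Nat.cast_ne_zero]
          omega
        have hPvne : (∏ i ∈ (lam.erase v).toFinset,
            (Nat.factorial ((lam.erase v).count i - μ.count i) : ℂ)) ≠ 0 := by
          rw [Finset.prod_ne_zero_iff]
          intro i _
          exact_mod_cast Nat.factorial_ne_zero _
        have hfne : (Nat.factorial (l + 1 + μ.card - lam.card) : ℂ) ≠ 0 := by
          exact_mod_cast Nat.factorial_ne_zero _
        field_simp
      · rw [if_neg hme]
        have hcnt : lam.count v - μ.count v = 0 := by
          have h1 := Multiset.le_iff_count.mp hμ v
          have h2 := (le_erase_iff hμ v hvm).not.mp hme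
          omega
        rw [hcnt]
        norm_num
    rw [Finset.sum_congr rfl hterm, ← Finset.mul_sum]
    have hsum : (∑ v ∈ lam.toFinset, ((lam.count v - μ.count v : ℕ) : ℂ))
        = ((lam.card - μ.card : ℕ) : ℂ) := by
      rw [← Nat.cast_sum, sum_counts_sub hμ]
    rw [hsum]
    by_cases h2 : lam.card ≤ l + μ.card
    · rw [coefC, if_pos h2, coefC, if_pos (by omega : lam.card ≤ l + 1 + μ.card)]
      have e1 : l + 1 + μ.card - lam.card = (l + μ.card - lam.card) + 1 := by omega
      rw [e1, Nat.factorial_succ, Nat.factorial_succ l]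
      have e2 : ((lam.card - μ.card : ℕ) : ℂ)
          = (l : ℂ) - ((l + μ.card - lam.card : ℕ) : ℂ) := by
        have : (lam.card - μ.card) + (l + μ.card - lam.card) = l := by omega
        have := congrArg (Nat.cast : ℕ → ℂ) this
        push_cast at this
        linear_combination this
      rw [e2, pow_succ]
      have hfne : (Nat.factorial (l + μ.card - lam.card) : ℂ) ≠ 0 := by
        exact_mod_cast Nat.factorial_ne_zero _
      have ht1 : ((l + μ.card - lam.card : ℕ) : ℂ) + 1 ≠ 0 := Nat.cast_add_one_ne_zero _
      push_cast
      linear_combination fid1 ((-1 : ℂ) ^ l) ((Nat.factorial l : ℂ))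
        ((μ.count (lam.sum - μ.sum + k) : ℂ) + 1)
        (∏ i ∈ lam.toFinset, (Nat.factorial (lam.count i - μ.count i) : ℂ))
        ((Nat.factorial (l + μ.card - lam.card) : ℂ))
        ((l + μ.card - lam.card : ℕ) : ℂ) (l : ℂ) hPne hfne ht1
    · have hM : lam.card = l + 1 + μ.card := by omega
      rw [coefC, if_neg h2, coefC, if_pos (by omega : lam.card ≤ l + 1 + μ.card)]
      have e1 : l + 1 + μ.card - lam.card = 0 := by omega
      rw [e1]
      have e2 : ((lam.card - μ.card : ℕ) : ℂ) = (l : ℂ) + 1 := by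
        have : lam.card - μ.card = l + 1 := by omega
        rw [this]
        push_cast
        ring
      rw [e2, Nat.factorial_succ l, Nat.factorial_zero, pow_succ]
      push_cast
      field_simp
      ring
  · have hz : ∀ v ∈ lam.toFinset,
        (if μ ≤ lam.erase v then coefC (k + v) l (lam.erase v) μ else 0) = 0 := by
      intro v hv
      have hvm : v ∈ lam := Multiset.mem_toFinset.mp hv
      have hMpos : 0 < lam.card := Multiset.card_pos_iff_exists_mem.mpr ⟨v, hvm⟩
      have hcard : (lam.erase v).card = lam.card - 1 := by
        rw [Multiset.card_erase_of_mem hvm, Nat.pred_eq_sub_one]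
      rw [coefC, if_neg (by omega : ¬ (lam.erase v).card ≤ l + μ.card)]
      rw [ite_self]
    rw [Finset.sum_eq_zero hz, coefC, if_neg (by omega : ¬ lam.card ≤ l + μ.card),
      coefC, if_neg (by omega : ¬ lam.card ≤ l + 1 + μ.card)]
    norm_num

private noncomputable def RHSsum (k l : ℕ) (lam : Multiset ℕ) :
    MvPowerSeries (ℕ × Fin 2) ℂ :=
  ∑ μ ∈ lam.powerset.toFinset,
    coefC k l lam μ • mm ((lam.sum - μ.sum + k, 0) ::ₘ mpart μ (lam.sum + k))

private lemma mem_pow_toFinset {μ lam : Multiset ℕ} :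
    μ ∈ lam.powerset.toFinset ↔ μ ≤ lam := by
  rw [Multiset.mem_toFinset, Multiset.mem_powerset]

private lemma ZSUM (k l : ℕ) (lam : Multiset ℕ) :
    RHSsum k l lam + (∑ v ∈ lam.toFinset, RHSsum (k + v) l (lam.erase v))
      + RHSsum k (l + 1) lam = 0 := by
  have stepA : ∀ v ∈ lam.toFinset, RHSsum (k + v) l (lam.erase v)
      = ∑ μ ∈ lam.powerset.toFinset,
          (if μ ≤ lam.erase v then coefC (k + v) l (lam.erase v) μ else 0) •
            mm ((lam.sum - μ.sum + k, 0) ::ₘ mpart μ (lam.sum + k)) := by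
    intro v hv
    have hvm : v ∈ lam := Multiset.mem_toFinset.mp hv
    have hes : (lam.erase v).sum + v = lam.sum := sum_erase_add hvm
    have h1 : ∀ μ ∈ (lam.erase v).powerset.toFinset,
        coefC (k + v) l (lam.erase v) μ •
            mm (((lam.erase v).sum - μ.sum + (k + v), 0) ::ₘ
              mpart μ ((lam.erase v).sum + (k + v)))
          = (if μ ≤ lam.erase v then coefC (k + v) l (lam.erase v) μ else 0) •
            mm ((lam.sum - μ.sum + k, 0) ::ₘ mpart μ (lam.sum + k)) := by
      intro μ hμ
      have hμe : μ ≤ lam.erase v := mem_pow_toFinset.mp hμ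
      have hms : μ.sum ≤ (lam.erase v).sum := msum_le hμe
      have e1 : (lam.erase v).sum - μ.sum + (k + v) = lam.sum - μ.sum + k := by omega
      have e2 : (lam.erase v).sum + (k + v) = lam.sum + k := by omega
      rw [if_pos hμe, e1, e2]
    rw [RHSsum, Finset.sum_congr rfl h1]
    refine Finset.sum_subset ?_ ?_
    · intro μ hμ
      rw [mem_pow_toFinset] at hμ ⊢
      exact le_trans hμ (Multiset.erase_le v lam)
    · intro μ _ hnot
      rw [if_neg (fun hc => hnot (mem_pow_toFinset.mpr hc)), zero_smul]
  rw [Finset.sum_congr rfl stepA, Finset.sum_comm, RHSsum, RHSsum,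
    ← Finset.sum_add_distrib, ← Finset.sum_add_distrib]
  refine Finset.sum_eq_zero fun μ hμ => ?_
  have hμl : μ ≤ lam := mem_pow_toFinset.mp hμ
  rw [← Finset.sum_smul, ← add_smul, ← add_smul, KEY k l lam μ hμl, zero_smul]

private lemma zero_notin_mpart (lam : Multiset ℕ) (h0 : (0 : ℕ) ∉ lam) (s : ℕ) :
    ((0 : ℕ), (0 : ℕ)) ∉ mpart lam s := by
  intro hc
  rw [mpart, Multiset.mem_add] at hc
  rcases hc with hc | hc
  · obtain ⟨i, hi, hie⟩ := Multiset.mem_map.mp hc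
    obtain ⟨h1, -⟩ := Prod.ext_iff.mp hie
    simp only at h1
    exact h0 (h1 ▸ hi)
  · have := Multiset.eq_of_mem_replicate hc
    exact absurd (Prod.ext_iff.mp this).2 (by norm_num)

private lemma MAIN (l : ℕ) : ∀ k : ℕ, l ≤ k → ∀ lam : Multiset ℕ, (0 : ℕ) ∉ lam →
    (if l = 0 then ((lam.count k : ℂ) + 1) else 1) •
        mm ((k, l) ::ₘ mpart lam (lam.sum + k - l)) - RHSsum k l lam ∈ Jbar := by
  induction l with
  | zero =>
    intro k _ lam _
    have hval : RHSsum k 0 lam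
        = ((lam.count k : ℂ) + 1) • mm ((k, 0) ::ₘ mpart lam (lam.sum + k - 0)) := by
      rw [RHSsum]
      rw [Finset.sum_eq_single lam ?h1 ?h2]
      · have e1 : lam.sum - lam.sum + k = k := by omega
        have e2 : coefC k 0 lam lam = (lam.count k : ℂ) + 1 := by
          rw [coefC, if_pos (by omega)]
          have e3 : ∀ i ∈ lam.toFinset,
              (Nat.factorial (lam.count i - lam.count i) : ℂ) = 1 := by
            intro i _
            rw [Nat.sub_self, Nat.factorial_zero, Nat.cast_one]
          rw [Finset.prod_congr rfl e3, Finset.prod_const_one, e1]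
          norm_num
        rw [e1, e2, Nat.sub_zero]
      case h1 =>
        intro μ hμ hne
        have hμl : μ ≤ lam := mem_pow_toFinset.mp hμ
        have hlt : μ.card < lam.card := Multiset.card_lt_card (lt_of_le_of_ne hμl hne)
        rw [coefC, if_neg (by omega), zero_smul]
      case h2 =>
        intro hc
        exact absurd (mem_pow_toFinset.mpr le_rfl) hc
    rw [if_pos rfl, hval, sub_self]
    exact Submodule.zero_mem _
  | succ l ih =>
    intro k hk lam h0
    rw [if_neg (Nat.succ_ne_zero l), one_smul]
    set r := lam.sum + k - (l + 1) with hrdef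
    have hvsum : ∀ v ∈ lam, v ≤ lam.sum := fun v hv => Multiset.le_sum_of_mem hv
    have hr1 : r + 1 = lam.sum + k - l := by omega
    have hE := EXP k l (by omega) lam h0 r
    simp only [G0, G1, GV] at hE
    -- coefficient identification
    have hc0 : ((Multiset.count ((k, l) : ℕ × ℕ) (mpart lam (r + 1)) : ℂ) + 1)
        = (if l = 0 then ((lam.count k : ℂ) + 1) else 1) := by
      rw [cntL]
      by_cases hl0 : l = 0
      · subst hl0
        rw [if_pos rfl, if_pos rfl, if_neg (by omega : ¬(k = 0 ∧ (0:ℕ) = 1))]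
        push_cast
        ring
      · rw [if_neg hl0, if_neg (by omega : ¬(k = 0 ∧ l = 1)), if_neg hl0]
        norm_num
    have hcv : ∀ v ∈ lam.toFinset,
        ((Multiset.count ((k + v, l) : ℕ × ℕ) (mpart (lam.erase v) (r + 1)) : ℂ) + 1)
          = (if l = 0 then (((lam.erase v).count (k + v) : ℂ) + 1) else 1) := by
      intro v hv
      rw [cntL]
      by_cases hl0 : l = 0
      · subst hl0
        rw [if_pos rfl, if_pos rfl, if_neg (by omega : ¬(k + v = 0 ∧ (0:ℕ) = 1))]
        push_cast
        ring
      · rw [if_neg hl0, if_neg (by omega : ¬(k + v = 0 ∧ l = 1)), if_neg hl0]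
        norm_num
    rw [hc0] at hE
    rw [Finset.sum_congr rfl (fun v hv => by rw [hcv v hv])] at hE
    -- the generator
    have hgen : mm {((k : ℕ), (l : ℕ))} * mm (mpart lam (r + 1)) ∈ Jbar :=
      Submodule.subset_span ⟨k, l, mpart lam (r + 1), by omega,
        zero_notin_mpart lam h0 (r + 1), rfl⟩
    -- induction hypotheses
    have hA : (if l = 0 then ((lam.count k : ℂ) + 1) else 1) •
        mm ((k, l) ::ₘ mpart lam (r + 1)) - RHSsum k l lam ∈ Jbar := by
      have := ih k (by omega) lam h0
      rw [← hr1] at this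
      exact this
    have hB : ∀ v ∈ lam.toFinset,
        (if l = 0 then (((lam.erase v).count (k + v) : ℂ) + 1) else 1) •
            mm ((k + v, l) ::ₘ mpart (lam.erase v) (r + 1))
          - RHSsum (k + v) l (lam.erase v) ∈ Jbar := by
      intro v hv
      have hvm : v ∈ lam := Multiset.mem_toFinset.mp hv
      have h0' : (0 : ℕ) ∉ lam.erase v := fun hc => h0 (Multiset.mem_of_mem_erase hc)
      have hes : (lam.erase v).sum + v = lam.sum := sum_erase_add hvm
      have := ih (k + v) (by omega) (lam.erase v) h0'
      have hsh : (lam.erase v).sum + (k + v) - l = r + 1 := by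
        have := hvsum v hvm
        omega
      rw [hsh] at this
      exact this
    -- the algebraic identity
    have hZ := ZSUM k l lam
    have hRn : RHSsum k (l + 1) lam
        = -(RHSsum k l lam + ∑ v ∈ lam.toFinset, RHSsum (k + v) l (lam.erase v)) :=
      eq_neg_of_add_eq_zero_right hZ
    have heq : mm ((k, l + 1) ::ₘ mpart lam r) - RHSsum k (l + 1) lam
        = (mm {((k : ℕ), (l : ℕ))} * mm (mpart lam (r + 1)))
          - ((if l = 0 then ((lam.count k : ℂ) + 1) else 1) •
              mm ((k, l) ::ₘ mpart lam (r + 1)) - RHSsum k l lam)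
          - (∑ v ∈ lam.toFinset,
              ((if l = 0 then (((lam.erase v).count (k + v) : ℂ) + 1) else 1) •
                  mm ((k + v, l) ::ₘ mpart (lam.erase v) (r + 1))
                - RHSsum (k + v) l (lam.erase v))) := by
      rw [hE, hRn, Finset.sum_sub_distrib]
      abel
    rw [heq]
    exact Submodule.sub_mem _ (Submodule.sub_mem _ hgen hA)
      (Submodule.sum_mem _ fun v hv => hB v hv)


open scoped Classical in
/-- In `S̄`, for `k ≥ l > 0` and a partition `λ = (1^{α₁}2^{α₂}…)`:
`m̄_{(k,l)(λ,0)(0,1)^{|λ|+k−l}} = Σ_μ ((−1)^l l! (β_{|λ|−|μ|+k}+1) /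
((l−ℓ(λ)+ℓ(μ))! ∏ᵢ (αᵢ−βᵢ)!)) m̄_{(|λ|−|μ|+k,0)(μ,0)(0,1)^{|λ|+k}}`, the sum over
partitions `μ ⪯ λ` with `ℓ(λ)−ℓ(μ) ≤ l` (the others vanish by the convention `1/x!=0`
for `x<0`); stated as membership of the difference in the ideal `(m_{(a,b)} : a ≠ b)`. -/
theorem stmt7 (k l : ℕ) (hl : 0 < l) (hkl : l ≤ k)
    (lam : Multiset ℕ) (h0 : (0 : ℕ) ∉ lam) :
    mm ((k, l) ::ₘ (lam.map (fun i => (i, 0)) +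
        Multiset.replicate (lam.sum + k - l) ((0 : ℕ), (1 : ℕ)))) -
      ∑ μ ∈ lam.powerset.toFinset,
        (if lam.card ≤ l + μ.card then
          (((-1 : ℂ) ^ l * (Nat.factorial l : ℂ) *
              ((μ.count (lam.sum - μ.sum + k) : ℂ) + 1)) /
            ((Nat.factorial (l + μ.card - lam.card) : ℂ) *
              ∏ i ∈ lam.toFinset, (Nat.factorial (lam.count i - μ.count i) : ℂ))) •
          mm ((lam.sum - μ.sum + k, 0) ::ₘ (μ.map (fun i => (i, 0)) +
              Multiset.replicate (lam.sum + k) ((0 : ℕ), (1 : ℕ))))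
        else 0) ∈ Jbar := by
  have h := MAIN l k hkl lam h0
  rw [if_neg (by omega : ¬ l = 0), one_smul] at h
  have hfold : ∀ μ : Multiset ℕ,
      coefC k l lam μ • mm ((lam.sum - μ.sum + k, 0) ::ₘ mpart μ (lam.sum + k))
        = (if lam.card ≤ l + μ.card then
            (((-1 : ℂ) ^ l * (Nat.factorial l : ℂ) *
                ((μ.count (lam.sum - μ.sum + k) : ℂ) + 1)) /
              ((Nat.factorial (l + μ.card - lam.card) : ℂ) *
                ∏ i ∈ lam.toFinset, (Nat.factorial (lam.count i - μ.count i) : ℂ))) •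
            mm ((lam.sum - μ.sum + k, 0) ::ₘ (μ.map (fun i => (i, 0)) +
                Multiset.replicate (lam.sum + k) ((0 : ℕ), (1 : ℕ))))
          else 0) := by
    intro μ
    rw [coefC, ite_smul, zero_smul, mpart]
  rw [show (lam.map (fun i => (i, 0)) +
      Multiset.replicate (lam.sum + k - l) ((0 : ℕ), (1 : ℕ)))
      = mpart lam (lam.sum + k - l) from (by rw [mpart])]
  rw [Finset.sum_congr rfl fun μ _ => (hfold μ).symm]
  exact h
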